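/- Theorem 1 (error propagation bound for Mirror Descent Value Iteration with constant KL coefficient): Fix λ > 0 and consider the scheme: π_0 the uniform policy; for each k ≥ 0, π_{k+1}(a|s) = π_k(a|s) exp(q_k(s,a)/λ) / Σ_b π_k(b|s) exp(q_k(s,b)/λ) (the maximizer of π ↦ ⟨π, q_k⟩ − λ KL(π||π_k)) and q_{k+1} = T^{λ,0}_{π_{k+1}|π_k} q_k + ε_{k+1} for given ε_{k+1} ∈ ℝ^{S×A}. Let q_max ≥ 0 satisfy ‖q_j‖_∞ ≤ q_max for all j, and let π_* be an optimal policy (q_{π_*} ≥ q_π componentwise for every policy π), with q_* = q_{π_*}. Then for every k ≥ 1: ‖q_* − q_{π_{k+1}}‖_∞ ≤ (2/(1−γ)) · (1/k) · ( ‖Σ_{j=1}^k ε_j‖_∞ + 2 q_max + λ γ ln|A| ). -/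

import Mathlib

open Finset

noncomputable section

/-- A transition kernel on a finite MDP: `P s a s'` is the probability of moving to `s'`
from `s` after action `a`. -/
def IsKernel {S A : Type*} [Fintype S] (P : S → A → S → ℝ) : Prop :=
  (∀ s a s', 0 ≤ P s a s') ∧ ∀ s a, ∑ s', P s a s' = 1

/-- A policy: `π s a` is the probability of action `a` in state `s`. -/
def IsPolicy {S A : Type*} [Fintype A] (π : S → A → ℝ) : Prop :=
  (∀ s a, 0 ≤ π s a) ∧ ∀ s, ∑ a, π s a = 1

/-- `(P v)(s,a) = ∑_{s'} P(s'|s,a) v(s')`. -/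
def kerApp {S A : Type*} [Fintype S] (P : S → A → S → ℝ) (v : S → ℝ) : S → A → ℝ :=
  fun s a => ∑ s', P s a s' * v s'

/-- `⟨f₁,f₂⟩(s) = ∑_a f₁(s,a) f₂(s,a)`. -/
def dotSA {S A : Type*} [Fintype A] (f₁ f₂ : S → A → ℝ) : S → ℝ :=
  fun s => ∑ a, f₁ s a * f₂ s a

/-- The policy-induced transition operator `P_π q = P ⟨π, q⟩` on `ℝ^{S×A}`. -/
def Ppi {S A : Type*} [Fintype S] [Fintype A] (P : S → A → S → ℝ) (π : S → A → ℝ)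
    (q : S → A → ℝ) : S → A → ℝ :=
  kerApp P (dotSA π q)

/-- The Bellman evaluation operator `T_π q = r + γ P_π q`. -/
def bellman {S A : Type*} [Fintype S] [Fintype A] (P : S → A → S → ℝ) (r : S → A → ℝ)
    (γ : ℝ) (π : S → A → ℝ) (q : S → A → ℝ) : S → A → ℝ :=
  fun s a => r s a + γ * Ppi P π q s a

/-- The Shannon entropy of a policy, `H(π)(s) = -∑_a π(a|s) ln π(a|s)` (with `0 ln 0 = 0`). -/
def entPol {S A : Type*} [Fintype A] (π : S → A → ℝ) : S → ℝ :=
  fun s => -∑ a, π s a * Real.log (π s a)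

/-- The KL divergence between policies,
`KL(π₁‖π₂)(s) = ∑_a π₁(a|s)(ln π₁(a|s) - ln π₂(a|s))`. -/
def klPol {S A : Type*} [Fintype A] (π₁ π₂ : S → A → ℝ) : S → ℝ :=
  fun s => ∑ a, π₁ s a * (Real.log (π₁ s a) - Real.log (π₂ s a))

/-- The KL-regularized Bellman operator `T^{λ,0}_{π|μ} q = r + γ P(⟨π,q⟩ - λ KL(π‖μ))`. -/
def TKL {S A : Type*} [Fintype S] [Fintype A] (P : S → A → S → ℝ) (r : S → A → ℝ)
    (γ lam : ℝ) (π μ : S → A → ℝ) (q : S → A → ℝ) : S → A → ℝ :=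
  fun s a => r s a + γ * kerApp P (fun s' => dotSA π q s' - lam * klPol π μ s') s a

/-- The entropy-regularized Bellman operator `T^{0,τ}_π q = r + γ P(⟨π,q⟩ + τ H(π))`. -/
def TH {S A : Type*} [Fintype S] [Fintype A] (P : S → A → S → ℝ) (r : S → A → ℝ)
    (γ tau : ℝ) (π : S → A → ℝ) (q : S → A → ℝ) : S → A → ℝ :=
  fun s a => r s a + γ * kerApp P (fun s' => dotSA π q s' + tau * entPol π s') s a

namespace MDVIAux
variable {A : Type*} [Fintype A] [Nonempty A]

/-- softmax -/
def sm (x : A → ℝ) (a : A) : ℝ := Real.exp (x a) / ∑ b, Real.exp (x b)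

lemma Zpos (x : A → ℝ) : 0 < ∑ b, Real.exp (x b) :=
  Finset.sum_pos (fun b _ => Real.exp_pos _) univ_nonempty

lemma sm_pos (x : A → ℝ) (a : A) : 0 < sm x a :=
  div_pos (Real.exp_pos _) (Zpos x)

lemma sm_sum (x : A → ℝ) : ∑ a, sm x a = 1 := by
  simp only [sm]
  simp only [← Finset.sum_div]
  exact div_self (Zpos x).ne'

lemma log_sm (x : A → ℝ) (a : A) :
    Real.log (sm x a) = x a - Real.log (∑ b, Real.exp (x b)) := by
  rw [sm, Real.log_div (Real.exp_pos _).ne' (Zpos x).ne', Real.log_exp]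

/-- Gibbs inequality -/
lemma gibbs (x : A → ℝ) (ρ : A → ℝ) (hρ0 : ∀ a, 0 ≤ ρ a) (hρ1 : ∑ a, ρ a = 1) :
    ∑ a, (ρ a * x a - ρ a * Real.log (ρ a)) ≤ Real.log (∑ a, Real.exp (x a)) := by
  set Z := ∑ b, Real.exp (x b) with hZ
  have hZpos : 0 < Z := Zpos x
  have key : ∀ a, ρ a * x a - ρ a * Real.log (ρ a) - ρ a * Real.log Z
      ≤ Real.exp (x a) / Z - ρ a := by
    intro a
    rcases eq_or_lt_of_le (hρ0 a) with h | h
    · rw [← h]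
      simp only [zero_mul, sub_zero, sub_self]
      positivity
    · have h1 : Real.log (Real.exp (x a) / (ρ a * Z)) ≤ Real.exp (x a) / (ρ a * Z) - 1 :=
        Real.log_le_sub_one_of_pos (by positivity)
      have h2 : Real.log (Real.exp (x a) / (ρ a * Z)) = x a - Real.log (ρ a) - Real.log Z := by
        rw [Real.log_div (Real.exp_pos _).ne' (by positivity), Real.log_exp,
          Real.log_mul h.ne' hZpos.ne']
        ring
      have h3 := mul_le_mul_of_nonneg_left (h2 ▸ h1) (hρ0 a)
      have h4 : ρ a * (Real.exp (x a) / (ρ a * Z) - 1) = Real.exp (x a) / Z - ρ a := by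
        field_simp
      calc ρ a * x a - ρ a * Real.log (ρ a) - ρ a * Real.log Z
          = ρ a * (x a - Real.log (ρ a) - Real.log Z) := by ring
        _ ≤ ρ a * (Real.exp (x a) / (ρ a * Z) - 1) := h3
        _ = Real.exp (x a) / Z - ρ a := h4
  have hsum : ∑ a, (ρ a * x a - ρ a * Real.log (ρ a) - ρ a * Real.log Z)
      ≤ ∑ a, (Real.exp (x a) / Z - ρ a) := Finset.sum_le_sum (fun a _ => key a)
  have e1 : ∑ a, (ρ a * x a - ρ a * Real.log (ρ a) - ρ a * Real.log Z)
      = (∑ a, (ρ a * x a - ρ a * Real.log (ρ a))) - Real.log Z := by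
    rw [Finset.sum_sub_distrib, ← Finset.sum_mul, hρ1, one_mul]
  have e2 : ∑ a, (Real.exp (x a) / Z - ρ a) = 0 := by
    rw [Finset.sum_sub_distrib, hρ1, ← Finset.sum_div, ← hZ, div_self hZpos.ne']
    ring
  rw [e1, e2] at hsum
  linarith

/-- entropy bound -/
lemma ent_le (ρ : A → ℝ) (hρ0 : ∀ a, 0 ≤ ρ a) (hρ1 : ∑ a, ρ a = 1) :
    -∑ a, ρ a * Real.log (ρ a) ≤ Real.log (Fintype.card A) := by
  have h := gibbs (fun _ => (0:ℝ)) ρ hρ0 hρ1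
  simp only [mul_zero, zero_sub, Real.exp_zero, Finset.sum_const, Finset.card_univ,
    nsmul_eq_mul, mul_one, Finset.sum_neg_distrib] at h
  linarith [h]

lemma ent_nonneg (ρ : A → ℝ) (hρ0 : ∀ a, 0 ≤ ρ a) (hρ1 : ∑ a, ρ a = 1) :
    0 ≤ -∑ a, ρ a * Real.log (ρ a) := by
  have hterm : ∀ a, ρ a * Real.log (ρ a) ≤ 0 := by
    intro a
    have hle1 : ρ a ≤ 1 := by
      rw [← hρ1]
      exact Finset.single_le_sum (fun b _ => hρ0 b) (mem_univ a)
    exact mul_nonpos_of_nonneg_of_nonpos (hρ0 a) (Real.log_nonpos (hρ0 a) hle1)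
  have h : ∑ a, ρ a * Real.log (ρ a) ≤ 0 :=
    Finset.sum_nonpos (fun a _ => hterm a)
  linarith

/-- expectation below log-sum-exp -/
lemma dot_le_lse (x : A → ℝ) (ρ : A → ℝ) (hρ0 : ∀ a, 0 ≤ ρ a) (hρ1 : ∑ a, ρ a = 1) :
    ∑ a, ρ a * x a ≤ Real.log (∑ a, Real.exp (x a)) := by
  have h1 := gibbs x ρ hρ0 hρ1
  have h2 := ent_nonneg ρ hρ0 hρ1
  rw [Finset.sum_sub_distrib] at h1
  linarith

/-- exact identity for softmax -/
lemma sm_lse (x : A → ℝ) :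
    (∑ a, sm x a * x a) - (∑ a, sm x a * Real.log (sm x a))
      = Real.log (∑ a, Real.exp (x a)) := by
  have h : ∀ a, sm x a * Real.log (sm x a)
      = sm x a * x a - sm x a * Real.log (∑ b, Real.exp (x b)) := by
    intro a; rw [log_sm]; ring
  simp only [h]
  rw [Finset.sum_sub_distrib, ← Finset.sum_mul, sm_sum, one_mul]
  ring

end MDVIAux

namespace MDVIAux
variable {A : Type*} [Fintype A] [Nonempty A]

lemma sum_mul_le (ρ : A → ℝ) (hρ0 : ∀ a, 0 ≤ ρ a) (hρ1 : ∑ a, ρ a = 1)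
    {x : A → ℝ} {M : ℝ} (h : ∀ a, x a ≤ M) : ∑ a, ρ a * x a ≤ M := by
  calc ∑ a, ρ a * x a ≤ ∑ a, ρ a * M :=
        Finset.sum_le_sum (fun a _ => mul_le_mul_of_nonneg_left (h a) (hρ0 a))
    _ = M := by rw [← Finset.sum_mul, hρ1, one_mul]

lemma le_sum_mul (ρ : A → ℝ) (hρ0 : ∀ a, 0 ≤ ρ a) (hρ1 : ∑ a, ρ a = 1)
    {x : A → ℝ} {M : ℝ} (h : ∀ a, M ≤ x a) : M ≤ ∑ a, ρ a * x a := by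
  calc M = ∑ a, ρ a * M := by rw [← Finset.sum_mul, hρ1, one_mul]
    _ ≤ ∑ a, ρ a * x a :=
        Finset.sum_le_sum (fun a _ => mul_le_mul_of_nonneg_left (h a) (hρ0 a))

end MDVIAux

namespace MDVIAux2
variable {S A : Type*} [Fintype S] [Fintype A] [Nonempty S] [Nonempty A]

lemma kerApp_add_const {P : S → A → S → ℝ} (hP : IsKernel P) (v : S → ℝ) (c : ℝ)
    (s : S) (a : A) : kerApp P (fun s' => v s' + c) s a = kerApp P v s a + c := by
  simp only [kerApp, mul_add]
  rw [Finset.sum_add_distrib, ← Finset.sum_mul, hP.2 s a, one_mul]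

lemma Ppi_comb (P : S → A → S → ℝ) (π : S → A → ℝ) (c₁ c₂ : ℝ) (f g : S → A → ℝ)
    (s : S) (a : A) :
    Ppi P π (fun s a => c₁ * f s a + c₂ * g s a) s a
      = c₁ * Ppi P π f s a + c₂ * Ppi P π g s a := by
  simp only [Ppi, kerApp, dotSA]
  have inner : ∀ s', ∑ b, π s' b * (c₁ * f s' b + c₂ * g s' b)
      = c₁ * (∑ b, π s' b * f s' b) + c₂ * (∑ b, π s' b * g s' b) := by
    intro s'
    rw [Finset.mul_sum, Finset.mul_sum, ← Finset.sum_add_distrib]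
    exact Finset.sum_congr rfl (fun b _ => by ring)
  calc ∑ s', P s a s' * ∑ b, π s' b * (c₁ * f s' b + c₂ * g s' b)
      = ∑ s', (c₁ * (P s a s' * ∑ b, π s' b * f s' b)
          + c₂ * (P s a s' * ∑ b, π s' b * g s' b)) := by
        refine Finset.sum_congr rfl (fun s' _ => ?_)
        rw [inner s']; ring
    _ = _ := by
        rw [Finset.sum_add_distrib, ← Finset.mul_sum, ← Finset.mul_sum]

end MDVIAux2

namespace MDVIAux2
open MDVIAux
variable {S A : Type*} [Fintype S] [Fintype A] [Nonempty S] [Nonempty A]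

lemma abs_apply_le_norm (f : S → A → ℝ) (s : S) (a : A) : |f s a| ≤ ‖f‖ := by
  calc |f s a| = ‖f s a‖ := (Real.norm_eq_abs _).symm
    _ ≤ ‖f s‖ := norm_le_pi_norm (f s) a
    _ ≤ ‖f‖ := norm_le_pi_norm f s

lemma dotSA_le {π : S → A → ℝ} (hπ : IsPolicy π) {f : S → A → ℝ} {s : S} {M : ℝ}
    (h : ∀ a, f s a ≤ M) : dotSA π f s ≤ M := by
  calc dotSA π f s ≤ ∑ a, π s a * M :=
        Finset.sum_le_sum (fun a _ => mul_le_mul_of_nonneg_left (h a) (hπ.1 s a))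
    _ = M := by rw [← Finset.sum_mul, hπ.2 s, one_mul]

lemma le_dotSA {π : S → A → ℝ} (hπ : IsPolicy π) {f : S → A → ℝ} {s : S} {M : ℝ}
    (h : ∀ a, M ≤ f s a) : M ≤ dotSA π f s := by
  calc M = ∑ a, π s a * M := by rw [← Finset.sum_mul, hπ.2 s, one_mul]
    _ ≤ dotSA π f s :=
        Finset.sum_le_sum (fun a _ => mul_le_mul_of_nonneg_left (h a) (hπ.1 s a))

lemma kerApp_le {P : S → A → S → ℝ} (hP : IsKernel P) {v : S → ℝ} {M : ℝ}
    (h : ∀ s', v s' ≤ M) (s : S) (a : A) : kerApp P v s a ≤ M := by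
  calc kerApp P v s a ≤ ∑ s', P s a s' * M :=
        Finset.sum_le_sum (fun s' _ => mul_le_mul_of_nonneg_left (h s') (hP.1 s a s'))
    _ = M := by rw [← Finset.sum_mul, hP.2 s a, one_mul]

lemma kerApp_mono {P : S → A → S → ℝ} (hP : IsKernel P) {v w : S → ℝ}
    (h : ∀ s', v s' ≤ w s') (s : S) (a : A) : kerApp P v s a ≤ kerApp P w s a :=
  Finset.sum_le_sum (fun s' _ => mul_le_mul_of_nonneg_left (h s') (hP.1 s a s'))

lemma kerApp_sub_const {P : S → A → S → ℝ} (hP : IsKernel P) (v : S → ℝ) (c : ℝ)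
    (s : S) (a : A) : kerApp P (fun s' => v s' - c) s a = kerApp P v s a - c := by
  simp only [kerApp, mul_sub]
  rw [Finset.sum_sub_distrib, ← Finset.sum_mul, hP.2 s a, one_mul]

lemma kerApp_smul (P : S → A → S → ℝ) (v : S → ℝ) (c : ℝ) (s : S) (a : A) :
    kerApp P (fun s' => c * v s') s a = c * kerApp P v s a := by
  simp only [kerApp, Finset.mul_sum]
  exact Finset.sum_congr rfl (fun s' _ => by ring)

/-- contraction-style bound -/
lemma contraction {P : S → A → S → ℝ} (hP : IsKernel P) {π : S → A → ℝ}
    (hπ : IsPolicy π) {γ : ℝ} (hγ0 : 0 ≤ γ) (hγ1 : γ < 1) {d : S → A → ℝ} {c : ℝ}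
    (h : ∀ s a, d s a ≤ γ * Ppi P π d s a + c) :
    ∀ s a, d s a ≤ c / (1 - γ) := by
  obtain ⟨p, -, hp⟩ := Finset.exists_max_image (Finset.univ : Finset (S × A))
    (fun p => d p.1 p.2) ⟨(Classical.arbitrary S, Classical.arbitrary A), Finset.mem_univ _⟩
  set M := d p.1 p.2 with hM
  have hub : ∀ s a, d s a ≤ M := fun s a => hp (s, a) (Finset.mem_univ _)
  have hPpi : ∀ s a, Ppi P π d s a ≤ M := fun s a =>
    kerApp_le hP (fun s' => dotSA_le hπ (fun a' => hub s' a')) s a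
  have hMc : M ≤ γ * M + c := by
    calc M ≤ γ * Ppi P π d p.1 p.2 + c := h p.1 p.2
      _ ≤ γ * M + c := by nlinarith [hPpi p.1 p.2]
  have hMle : M ≤ c / (1 - γ) := by
    rw [le_div_iff₀ (by linarith)]
    nlinarith
  exact fun s a => le_trans (hub s a) hMle

end MDVIAux2


open MDVIAux MDVIAux2

/-- Theorem 1: error propagation bound for Mirror Descent Value
Iteration with a constant KL coefficient `λ`. `‖·‖` on `S → A → ℝ` is the sup norm. -/
theorem mdvi_constant_kl_error_propagation_bound
    {S A : Type*} [Fintype S] [Fintype A] [Nonempty S] [Nonempty A]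
    (P : S → A → S → ℝ) (hP : IsKernel P)
    (r : S → A → ℝ) (γ : ℝ) (hγ0 : 0 < γ) (hγ1 : γ < 1)
    (lam : ℝ) (hlam : 0 < lam)
    (q ε : ℕ → S → A → ℝ)
    (π : ℕ → S → A → ℝ)
    (hπ0 : ∀ s a, π 0 s a = 1 / (Fintype.card A : ℝ))
    (hπ : ∀ k s a, π (k + 1) s a =
      π k s a * Real.exp (q k s a / lam) / ∑ b, π k s b * Real.exp (q k s b / lam))
    (hq : ∀ k s a, q (k + 1) s a =
      TKL P r γ lam (π (k + 1)) (π k) (q k) s a + ε (k + 1) s a)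
    (qmax : ℝ) (hqmax : 0 ≤ qmax)
    (hqb : ∀ j, ‖q j‖ ≤ qmax)
    (πstar : S → A → ℝ) (hπstar : IsPolicy πstar)
    (qstar : S → A → ℝ) (hqstar : qstar = bellman P r γ πstar qstar)
    (hopt : ∀ π' : S → A → ℝ, IsPolicy π' →
      ∀ qπ : S → A → ℝ, qπ = bellman P r γ π' qπ → ∀ s a, qπ s a ≤ qstar s a)
    (qpol : ℕ → S → A → ℝ)
    (hqpol : ∀ k, qpol k = bellman P r γ (π k) (qpol k)) :
    ∀ k : ℕ, 1 ≤ k →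
      ‖qstar - qpol (k + 1)‖ ≤
        2 / (1 - γ) * (1 / (k : ℝ)) *
          (‖∑ j ∈ Finset.Icc 1 k, ε j‖ + 2 * qmax
            + lam * γ * Real.log (Fintype.card A)) := by

  intro k hk
  have hcard : (1:ℝ) ≤ (Fintype.card A : ℝ) := by exact_mod_cast Fintype.card_pos
  have hlogA : 0 ≤ Real.log (Fintype.card A) := Real.log_nonneg hcard
  have hγ1' : (0:ℝ) < 1 - γ := by linarith
  have hk' : (1:ℝ) ≤ (k:ℝ) := by exact_mod_cast hk
  have hk0 : (0:ℝ) < (k:ℝ) := by linarith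
  set Sq : ℕ → S → A → ℝ := fun n s a => ∑ j ∈ Finset.range n, q j s a with hSq
  set lse : ℕ → S → ℝ :=
    fun n s => Real.log (∑ b, Real.exp (Sq n s b / lam)) with hlse
  -- closed form of the policies
  have hπc : ∀ n s a, π n s a = sm (fun b => Sq n s b / lam) a := by
    intro n
    induction n with
    | zero =>
      intro s a
      rw [hπ0]
      simp [sm, hSq, Finset.card_univ]
    | succ n ih =>
      intro s a
      have hwu : ∀ b, Sq (n+1) s b / lam = Sq n s b / lam + q n s b / lam := by
        intro b
        simp only [hSq, Finset.sum_range_succ, add_div]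
      have hY : (0:ℝ) < ∑ c, Real.exp (Sq n s c / lam) := Zpos _
      have h1 : ∀ b, π n s b * Real.exp (q n s b / lam)
          = Real.exp (Sq (n+1) s b / lam) / (∑ c, Real.exp (Sq n s c / lam)) := by
        intro b
        rw [ih s b, sm, div_mul_eq_mul_div, ← Real.exp_add, ← hwu b]
      have hSw : (0:ℝ) < ∑ b, Real.exp (Sq (n+1) s b / lam) := Zpos _
      rw [hπ n s a, h1 a, Finset.sum_congr rfl (fun b _ => h1 b), ← Finset.sum_div]
      simp only [sm]
      rw [div_div_div_eq, mul_comm, mul_div_mul_left _ _ hY.ne']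
  have hπpol : ∀ n, IsPolicy (π n) := by
    intro n
    refine ⟨fun s a => ?_, fun s => ?_⟩
    · rw [hπc]; exact (sm_pos _ _).le
    · rw [Finset.sum_congr rfl (fun a _ => hπc n s a)]
      exact sm_sum _
  -- per-step regularized value identity
  have hg : ∀ j s, dotSA (π (j+1)) (q j) s - lam * klPol (π (j+1)) (π j) s
      = lam * lse (j+1) s - lam * lse j s := by
    intro j s
    set u : A → ℝ := fun b => Sq j s b / lam with hu
    set w : A → ℝ := fun b => Sq (j+1) s b / lam with hw
    have hwu : ∀ b, w b = u b + q j s b / lam := by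
      intro b
      simp only [hu, hw, hSq, Finset.sum_range_succ, add_div]
    have hterm : ∀ a, π (j+1) s a * (Real.log (π (j+1) s a) - Real.log (π j s a))
        = sm w a * (q j s a / lam)
          + sm w a * (Real.log (∑ b, Real.exp (u b)) - Real.log (∑ b, Real.exp (w b))) := by
      intro a
      rw [hπc (j+1) s a, hπc j s a]
      rw [show (fun b => Sq (j+1) s b / lam) = w from rfl,
        show (fun b => Sq j s b / lam) = u from rfl]
      rw [log_sm, log_sm]
      rw [show (w a - Real.log (∑ b, Real.exp (w b))) - (u a - Real.log (∑ b, Real.exp (u b)))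
          = q j s a / lam + (Real.log (∑ b, Real.exp (u b)) - Real.log (∑ b, Real.exp (w b)))
        by rw [hwu a]; ring]
      ring
    have hkl : klPol (π (j+1)) (π j) s
        = (∑ a, sm w a * (q j s a / lam))
          + (Real.log (∑ b, Real.exp (u b)) - Real.log (∑ b, Real.exp (w b))) := by
      rw [klPol]
      rw [Finset.sum_congr rfl (fun a _ => hterm a), Finset.sum_add_distrib,
        ← Finset.sum_mul, sm_sum, one_mul]
    have hdot : dotSA (π (j+1)) (q j) s = ∑ a, sm w a * q j s a := by
      rw [dotSA]
      refine Finset.sum_congr rfl (fun a _ => ?_)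
      rw [hπc (j+1) s a]
    have hdiv : ∑ a, sm w a * (q j s a / lam) = (∑ a, sm w a * q j s a) / lam := by
      rw [Finset.sum_div]
      exact Finset.sum_congr rfl (fun a _ => (mul_div_assoc _ _ _).symm)
    have hlse1 : lse (j+1) s = Real.log (∑ b, Real.exp (w b)) := rfl
    have hlse0 : lse j s = Real.log (∑ b, Real.exp (u b)) := rfl
    rw [hkl, hdot, hdiv, hlse1, hlse0]
    field_simp
    ring
  -- the summed identity
  set E : S → A → ℝ := fun s a => ∑ j ∈ Finset.range k, ε (j+1) s a with hE
  set V : S → ℝ := fun s' => lam * lse k s' - lam * Real.log (Fintype.card A) with hV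
  have hstar : ∀ s a, Sq (k+1) s a
      = q 0 s a + k * r s a + γ * kerApp P V s a + E s a := by
    intro s a
    have hone : ∀ j, q (j+1) s a = r s a
        + γ * kerApp P (fun s' => lam * lse (j+1) s' - lam * lse j s') s a
        + ε (j+1) s a := by
      intro j
      rw [hq j s a]
      simp only [TKL]
      have hfn : (fun s' => dotSA (π (j+1)) (q j) s' - lam * klPol (π (j+1)) (π j) s')
          = fun s' => lam * lse (j+1) s' - lam * lse j s' := by
        funext s'
        exact hg j s'
      rw [hfn]
    have hsum : ∑ j ∈ Finset.range k, q (j+1) s a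
        = k * r s a + γ * (∑ j ∈ Finset.range k,
            kerApp P (fun s' => lam * lse (j+1) s' - lam * lse j s') s a)
          + E s a := by
      rw [Finset.sum_congr rfl (fun j _ => hone j), Finset.sum_add_distrib,
        Finset.sum_add_distrib, Finset.sum_const, Finset.card_range, ← Finset.mul_sum]
      simp only [hE, nsmul_eq_mul]
    have hswap : ∑ j ∈ Finset.range k,
        kerApp P (fun s' => lam * lse (j+1) s' - lam * lse j s') s a
        = kerApp P V s a := by
      simp only [kerApp]
      rw [Finset.sum_comm]
      refine Finset.sum_congr rfl (fun s' _ => ?_)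
      rw [← Finset.mul_sum]
      congr 1
      have htel := Finset.sum_range_sub (fun j => lam * lse j s') k
      rw [htel]
      simp only [hV]
      have h0 : lse 0 s' = Real.log (Fintype.card A) := by
        simp [hlse, hSq, Finset.card_univ]
      rw [h0]
    have hlhs : ∑ j ∈ Finset.range k, q (j+1) s a = Sq (k+1) s a - q 0 s a := by
      have : Sq (k+1) s a = ∑ j ∈ Finset.range (k+1), q j s a := rfl
      rw [this, Finset.sum_range_succ' (fun j => q j s a) k]
      ring
    rw [hlhs, hswap] at hsum
    linarith [hsum]
  -- bounds on q's and errors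
  have hqk : ∀ j s' b, |q j s' b| ≤ qmax := fun j s' b =>
    le_trans (abs_apply_le_norm (q j) s' b) (hqb j)
  set eb : ℝ := ‖∑ j ∈ Finset.Icc 1 k, ε j‖ with heb
  have heb0 : 0 ≤ eb := norm_nonneg _
  have hEeb : ∀ s a, |E s a| ≤ eb := by
    intro s a
    have hEeq : E s a = (∑ j ∈ Finset.Icc 1 k, ε j) s a := by
      simp only [hE, Finset.sum_apply]
      rw [← Finset.Ico_add_one_right_eq_Icc, Finset.sum_Ico_eq_sum_range]
      exact Finset.sum_congr (by simp) (fun j _ => by rw [add_comm])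
    rw [hEeq]
    exact abs_apply_le_norm _ s a
  -- upper bound on the soft value
  have hU : ∀ s', lam * lse k s'
      ≤ dotSA (π (k+1)) (Sq (k+1)) s' + lam * Real.log (Fintype.card A) + qmax := by
    intro s'
    set u : A → ℝ := fun b => Sq k s' b / lam with hu
    set w : A → ℝ := fun b => Sq (k+1) s' b / lam with hw
    have hwu : ∀ b, u b = w b - q k s' b / lam := by
      intro b
      simp only [hu, hw, hSq, Finset.sum_range_succ, add_div]
      ring
    have h1 : lse k s' = (∑ a, sm u a * u a) - (∑ a, sm u a * Real.log (sm u a)) :=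
      (sm_lse u).symm
    have h2 : ∑ a, sm u a * u a
        = (∑ a, sm u a * w a) - ∑ a, sm u a * (q k s' a / lam) := by
      rw [← Finset.sum_sub_distrib]
      refine Finset.sum_congr rfl (fun a _ => ?_)
      rw [hwu a]; ring
    have h3 : -(qmax/lam) ≤ ∑ a, sm u a * (q k s' a / lam) := by
      refine le_sum_mul (sm u) (fun a => (sm_pos u a).le) (sm_sum u) (fun a => ?_)
      rw [show -(qmax/lam) = (-qmax)/lam by ring]
      exact (div_le_div_iff_of_pos_right hlam).mpr (neg_le_of_abs_le (hqk k s' a))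
    have h4 := gibbs w (sm u) (fun a => (sm_pos u a).le) (sm_sum u)
    rw [Finset.sum_sub_distrib] at h4
    have h5 := sm_lse w
    have h6 := ent_le (sm w) (fun a => (sm_pos w a).le) (sm_sum w)
    have hchain : lse k s'
        ≤ (∑ a, sm w a * w a) + Real.log (Fintype.card A) + qmax/lam := by
      rw [h1, h2]
      linarith [h4, h5, h6, h3]
    have hdot : dotSA (π (k+1)) (Sq (k+1)) s' = lam * ∑ a, sm w a * w a := by
      rw [dotSA, Finset.mul_sum]
      refine Finset.sum_congr rfl (fun a _ => ?_)
      rw [hπc (k+1) s' a]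
      rw [show (fun b => Sq (k+1) s' b / lam) = w from rfl]
      have hval : lam * w a = Sq (k+1) s' a := by
        rw [hw]
        field_simp
      rw [← hval]; ring
    have hmul := mul_le_mul_of_nonneg_left hchain hlam.le
    rw [mul_add, mul_add] at hmul
    have hq' : lam * (qmax / lam) = qmax := by field_simp
    rw [hdot]
    linarith [hmul, hq']
  -- lower bound on the soft value
  have hL : ∀ s', dotSA πstar (Sq (k+1)) s' - qmax ≤ lam * lse k s' := by
    intro s'
    set u : A → ℝ := fun b => Sq k s' b / lam with hu
    set w : A → ℝ := fun b => Sq (k+1) s' b / lam with hw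
    have hwu : ∀ b, w b = u b + q k s' b / lam := by
      intro b
      simp only [hu, hw, hSq, Finset.sum_range_succ, add_div]
    have h1 : ∑ a, πstar s' a * u a ≤ lse k s' :=
      dot_le_lse u (πstar s') (fun a => hπstar.1 s' a) (hπstar.2 s')
    have h2 : ∑ a, πstar s' a * (q k s' a / lam) ≤ qmax/lam := by
      refine sum_mul_le (πstar s') (fun a => hπstar.1 s' a) (hπstar.2 s') (fun a => ?_)
      exact (div_le_div_iff_of_pos_right hlam).mpr (le_of_abs_le (hqk k s' a))
    have h3 : ∑ a, πstar s' a * w a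
        = (∑ a, πstar s' a * u a) + ∑ a, πstar s' a * (q k s' a / lam) := by
      rw [← Finset.sum_add_distrib]
      refine Finset.sum_congr rfl (fun a _ => ?_)
      rw [hwu a]; ring
    have hdot : dotSA πstar (Sq (k+1)) s' = lam * ∑ a, πstar s' a * w a := by
      rw [dotSA, Finset.mul_sum]
      refine Finset.sum_congr rfl (fun a _ => ?_)
      have hval : lam * w a = Sq (k+1) s' a := by
        rw [hw]
        field_simp
      rw [← hval]; ring
    have hsum : ∑ a, πstar s' a * w a ≤ lse k s' + qmax/lam := by
      rw [h3]; linarith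
    have hmul := mul_le_mul_of_nonneg_left hsum hlam.le
    rw [mul_add] at hmul
    have hq' : lam * (qmax / lam) = qmax := by field_simp
    rw [hdot]
    linarith [hmul, hq']
  -- the optimal-policy comparison
  have hqstar' : ∀ s a, qstar s a = r s a + γ * Ppi P πstar qstar s a := by
    intro s a
    exact congrFun (congrFun hqstar s) a
  set cm : ℝ := (1+γ)*qmax + γ*lam*Real.log (Fintype.card A) + eb with hcm
  set D : S → A → ℝ := fun s a => (k:ℝ) * qstar s a - Sq (k+1) s a with hD
  have hDrec : ∀ s a, D s a ≤ γ * Ppi P πstar D s a + cm := by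
    intro s a
    have hmono : kerApp P
        (fun s' => dotSA πstar (Sq (k+1)) s' - (qmax + lam * Real.log (Fintype.card A))) s a
        ≤ kerApp P V s a := by
      refine kerApp_mono hP (fun s' => ?_) s a
      have := hL s'
      simp only [hV]
      linarith
    rw [kerApp_sub_const hP] at hmono
    have hPpiD : Ppi P πstar D s a
        = (k:ℝ) * Ppi P πstar qstar s a - Ppi P πstar (Sq (k+1)) s a := by
      have hDfun : D = fun s a => (k:ℝ) * qstar s a + (-1) * Sq (k+1) s a := by
        funext s a; simp only [hD]; ring
      rw [hDfun, Ppi_comb]; ring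
    have hPpiSq : kerApp P (dotSA πstar (Sq (k+1))) s a = Ppi P πstar (Sq (k+1)) s a := rfl
    rw [hPpiSq] at hmono
    have h1 : D s a = γ * ((k:ℝ) * Ppi P πstar qstar s a) - γ * kerApp P V s a
        - q 0 s a - E s a := by
      simp only [hD]
      rw [hstar s a, hqstar' s a]
      ring
    have h3 : γ * Ppi P πstar (Sq (k+1)) s a
        - (γ * qmax + γ * (lam * Real.log (Fintype.card A)))
        ≤ γ * kerApp P V s a := by nlinarith [hmono, hγ0.le]
    have h4 : γ * Ppi P πstar D s a
        = γ * ((k:ℝ) * Ppi P πstar qstar s a) - γ * Ppi P πstar (Sq (k+1)) s a := by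
      rw [hPpiD]; ring
    have hq0 : -qmax ≤ q 0 s a := neg_le_of_abs_le (hqk 0 s a)
    have hEb : -eb ≤ E s a := neg_le_of_abs_le (hEeb s a)
    simp only [hcm]
    linarith [h1, h3, h4, hq0, hEb]
  have hDle := contraction hP hπstar hγ0.le hγ1 hDrec
  -- the learned-policy comparison
  have hqpol' : ∀ s a, qpol (k+1) s a
      = r s a + γ * Ppi P (π (k+1)) (qpol (k+1)) s a := by
    intro s a
    exact congrFun (congrFun (hqpol (k+1)) s) a
  set cp : ℝ := (1+γ)*qmax + eb with hcp
  set D' : S → A → ℝ := fun s a => Sq (k+1) s a - (k:ℝ) * qpol (k+1) s a with hD'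
  have hD'rec : ∀ s a, D' s a ≤ γ * Ppi P (π (k+1)) D' s a + cp := by
    intro s a
    have hmono : kerApp P V s a
        ≤ kerApp P (fun s' => dotSA (π (k+1)) (Sq (k+1)) s' + qmax) s a := by
      refine kerApp_mono hP (fun s' => ?_) s a
      have := hU s'
      simp only [hV]
      linarith
    rw [kerApp_add_const hP] at hmono
    have hPpiSq : kerApp P (dotSA (π (k+1)) (Sq (k+1))) s a
        = Ppi P (π (k+1)) (Sq (k+1)) s a := rfl
    rw [hPpiSq] at hmono
    have hPpiD : Ppi P (π (k+1)) D' s a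
        = Ppi P (π (k+1)) (Sq (k+1)) s a - (k:ℝ) * Ppi P (π (k+1)) (qpol (k+1)) s a := by
      have hDfun : D' = fun s a => (1:ℝ) * Sq (k+1) s a + (-(k:ℝ)) * qpol (k+1) s a := by
        funext s a; simp only [hD']; ring
      rw [hDfun, Ppi_comb]; ring
    have h1 : D' s a = q 0 s a + γ * kerApp P V s a + E s a
        - γ * ((k:ℝ) * Ppi P (π (k+1)) (qpol (k+1)) s a) := by
      simp only [hD']
      rw [hstar s a, hqpol' s a]
      ring
    have h3 : γ * kerApp P V s a
        ≤ γ * Ppi P (π (k+1)) (Sq (k+1)) s a + γ * qmax := by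
      nlinarith [hmono, hγ0.le]
    have h4 : γ * Ppi P (π (k+1)) D' s a
        = γ * Ppi P (π (k+1)) (Sq (k+1)) s a
          - γ * ((k:ℝ) * Ppi P (π (k+1)) (qpol (k+1)) s a) := by
      rw [hPpiD]; ring
    have hq0 : q 0 s a ≤ qmax := le_of_abs_le (hqk 0 s a)
    have hEb : E s a ≤ eb := le_of_abs_le (hEeb s a)
    simp only [hcp]
    linarith [h1, h3, h4, hq0, hEb]
  have hD'le := contraction hP (hπpol (k+1)) hγ0.le hγ1 hD'rec
  -- conclusion
  have hnonneg : ∀ s a, 0 ≤ qstar s a - qpol (k+1) s a := fun s a =>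
    sub_nonneg.mpr (hopt (π (k+1)) (hπpol (k+1)) (qpol (k+1)) (hqpol (k+1)) s a)
  set B : ℝ := 2 / (1 - γ) * (1 / (k : ℝ)) *
      (eb + 2 * qmax + lam * γ * Real.log (Fintype.card A)) with hB
  have hBnn : 0 ≤ B := by
    have h1 : 0 ≤ lam * γ * Real.log (Fintype.card A) :=
      mul_nonneg (mul_nonneg hlam.le hγ0.le) hlogA
    have h2 : 0 ≤ eb + 2 * qmax + lam * γ * Real.log (Fintype.card A) := by linarith
    have h3 : 0 ≤ 2 / (1 - γ) * (1 / (k : ℝ)) := by positivity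
    exact mul_nonneg h3 h2
  have hdiff : ∀ s a, qstar s a - qpol (k+1) s a ≤ B := by
    intro s a
    have hsumD : (k:ℝ) * (qstar s a - qpol (k+1) s a) = D s a + D' s a := by
      simp only [hD, hD']; ring
    have hle : (k:ℝ) * (qstar s a - qpol (k+1) s a) ≤ (cm + cp) / (1 - γ) := by
      rw [hsumD, add_div]
      exact add_le_add (hDle s a) (hD'le s a)
    have hkey : cm + cp ≤ 2 * (eb + 2 * qmax + lam * γ * Real.log (Fintype.card A)) := by
      simp only [hcm, hcp]
      nlinarith [mul_nonneg (sub_nonneg.mpr hγ1.le) hqmax, mul_nonneg (mul_nonneg hlam.le hγ0.le) hlogA]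
    have hkB : (k:ℝ) * B = 2 / (1 - γ) *
        (eb + 2 * qmax + lam * γ * Real.log (Fintype.card A)) := by
      simp only [hB]
      field_simp
    have hle2 : (cm + cp) / (1 - γ) ≤ (k:ℝ) * B := by
      rw [hkB]
      rw [div_le_iff₀ hγ1']
      have : 2 / (1 - γ) *
          (eb + 2 * qmax + lam * γ * Real.log (Fintype.card A)) * (1 - γ)
          = 2 * (eb + 2 * qmax + lam * γ * Real.log (Fintype.card A)) := by
        field_simp
      rw [this]
      exact hkey
    have := le_trans hle hle2
    exact le_of_mul_le_mul_left (by linarith) hk0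
  show ‖qstar - qpol (k + 1)‖ ≤ B
  rw [pi_norm_le_iff_of_nonneg hBnn]
  intro s
  rw [pi_norm_le_iff_of_nonneg hBnn]
  intro a
  rw [Real.norm_eq_abs, abs_le]
  constructor
  · have := hnonneg s a
    simp only [Pi.sub_apply]
    linarith [hBnn]
  · simp only [Pi.sub_apply]
    exact hdiff s a
end
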